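/- Let p₁, p₂, v₁, v₂ be vectors in the Euclidean plane with v₁ ≠ v₂, let d ∈ ℝ, and for τ ∈ ℝ define D(τ) = ‖(p₁ + τ • v₁) − (p₂ + τ • v₂)‖. Then there exist real numbers a and b such that {τ ∈ ℝ : D(τ) < d} = (a, b) (the open interval Ioo a b, which is empty when a ≥ b); consequently the feasible set {τ ∈ ℝ : D(τ) ≥ d} is the complement of a bounded open interval. -/

import Mathlib

/-- Under the linear pedestrian model with nonzero relative velocity, the set
of times when the gate is strictly narrower than the threshold `d` is a single
(possibly empty) bounded open interval, so the feasible set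
`{τ : D(τ) ≥ d}` is the complement of that interval. -/
theorem gate_infeasible_times_is_open_interval
    (p₁ p₂ v₁ v₂ : EuclideanSpace ℝ (Fin 2)) (hv : v₁ ≠ v₂) (d : ℝ) :
    ∃ a b : ℝ,
      {τ : ℝ | ‖(p₁ + τ • v₁) - (p₂ + τ • v₂)‖ < d} = Set.Ioo a b ∧
      {τ : ℝ | d ≤ ‖(p₁ + τ • v₁) - (p₂ + τ • v₂)‖} = (Set.Ioo a b)ᶜ := by
  set c : EuclideanSpace ℝ (Fin 2) := p₁ - p₂ with hc
  set q : EuclideanSpace ℝ (Fin 2) := v₁ - v₂ with hq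
  have hq0 : q ≠ 0 := sub_ne_zero.mpr hv
  have hqn : 0 < ‖q‖ := norm_pos_iff.mpr hq0
  have hrw : ∀ τ : ℝ, (p₁ + τ • v₁) - (p₂ + τ • v₂) = c + τ • q := by
    intro τ; rw [hc, hq, smul_sub]; abel
  set f : ℝ → ℝ := fun τ => ‖c + τ • q‖ with hf
  set S : Set ℝ := {τ : ℝ | f τ < d} with hS
  have hset1 : {τ : ℝ | ‖(p₁ + τ • v₁) - (p₂ + τ • v₂)‖ < d} = S := by
    ext τ; simp only [Set.mem_setOf_eq, hrw τ, hS, hf]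
  have hset2 : {τ : ℝ | d ≤ ‖(p₁ + τ • v₁) - (p₂ + τ • v₂)‖} = Sᶜ := by
    ext τ
    simp only [Set.mem_setOf_eq, hrw τ, hS, Set.mem_compl_iff, not_lt, hf]
  -- convexity of S
  have hconv : Convex ℝ S := by
    intro x hx y hy a b ha hb hab
    simp only [hS, Set.mem_setOf_eq, smul_eq_mul] at hx hy ⊢
    have key : c + (a * x + b * y) • q = a • (c + x • q) + b • (c + y • q) := by
      rw [smul_add, smul_add, add_smul, mul_smul, mul_smul,
        show a • c + a • (x • q) + (b • c + b • (y • q))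
            = (a + b) • c + (a • (x • q) + b • (y • q)) by rw [add_smul]; abel,
        hab, one_smul]
    have h1 : f (a * x + b * y) ≤ a * f x + b * f y := by
      show ‖c + (a * x + b * y) • q‖ ≤ a * ‖c + x • q‖ + b * ‖c + y • q‖
      rw [key]
      calc ‖a • (c + x • q) + b • (c + y • q)‖
          ≤ ‖a • (c + x • q)‖ + ‖b • (c + y • q)‖ := norm_add_le _ _
        _ = a * ‖c + x • q‖ + b * ‖c + y • q‖ := by
            rw [norm_smul, norm_smul, Real.norm_eq_abs, Real.norm_eq_abs,
              abs_of_nonneg ha, abs_of_nonneg hb]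
    have h2 : a * f x + b * f y < d := by
      rcases eq_or_lt_of_le ha with ha0 | ha0
      · have hb1 : b = 1 := by linarith
        rw [← ha0, hb1]; simpa using hy
      · have e1 : a * f x < a * d := mul_lt_mul_of_pos_left hx ha0
        have e2 : b * f y ≤ b * d := mul_le_mul_of_nonneg_left hy.le hb
        have e3 : a * d + b * d = d := by rw [← add_mul, hab, one_mul]
        linarith
    exact lt_of_le_of_lt h1 h2
  -- openness
  have hcont : Continuous f := (continuous_const.add (continuous_id.smul continuous_const)).norm
  have hopen : IsOpen S := isOpen_lt hcont continuous_const
  -- boundedness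
  set M : ℝ := (d + ‖c‖) / ‖q‖ with hM
  have hbdd : ∀ τ ∈ S, |τ| < M := by
    intro τ hτ
    have h2 : ‖τ • q‖ ≤ ‖c + τ • q‖ + ‖c‖ := by
      calc ‖τ • q‖ = ‖(c + τ • q) - c‖ := by rw [add_sub_cancel_left]
        _ ≤ ‖c + τ • q‖ + ‖c‖ := norm_sub_le _ _
    rw [norm_smul, Real.norm_eq_abs] at h2
    have h3 : f τ < d := hτ
    have h4 : ‖c + τ • q‖ < d := h3
    rw [hM, lt_div_iff₀ hqn]; nlinarith
  rw [hset1, hset2]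
  rcases Set.eq_empty_or_nonempty S with hE | hNE
  · exact ⟨0, 0, by rw [hE, Set.Ioo_self], by rw [hE, Set.Ioo_self]⟩
  have hbb : BddBelow S := ⟨-M, fun x hx => le_of_lt (abs_lt.mp (hbdd x hx)).1⟩
  have hba : BddAbove S := ⟨M, fun x hx => le_of_lt (abs_lt.mp (hbdd x hx)).2⟩
  have hIoo : S = Set.Ioo (sInf S) (sSup S) := by
    apply Set.Subset.antisymm
    · intro s hs
      obtain ⟨ε, hε, hball⟩ := Metric.isOpen_iff.mp hopen s hs
      have hdl : dist (s - ε / 2) s = ε / 2 := by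
        rw [Real.dist_eq, show s - ε / 2 - s = -(ε / 2) by ring, abs_neg,
          abs_of_pos (by linarith)]
      have hdr : dist (s + ε / 2) s = ε / 2 := by
        rw [Real.dist_eq, show s + ε / 2 - s = ε / 2 by ring, abs_of_pos (by linarith)]
      have hl : s - ε / 2 ∈ S := hball (by rw [Metric.mem_ball, hdl]; linarith)
      have hr : s + ε / 2 ∈ S := hball (by rw [Metric.mem_ball, hdr]; linarith)
      exact ⟨lt_of_le_of_lt (csInf_le hbb hl) (by linarith),
        lt_of_lt_of_le (by linarith) (le_csSup hba hr)⟩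
    · rintro τ ⟨hτ1, hτ2⟩
      obtain ⟨x, hxS, hx⟩ := exists_lt_of_csInf_lt hNE hτ1
      obtain ⟨y, hyS, hy⟩ := exists_lt_of_lt_csSup hNE hτ2
      exact hconv.ordConnected.out hxS hyS ⟨le_of_lt hx, le_of_lt hy⟩
  exact ⟨sInf S, sSup S, hIoo, by rw [← hIoo]⟩
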